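/- Let M₁ and M₂ be nearly S*-invariant subspaces of H^2 with M₁ ∩ M₂ ≠ {0}. Then M₁ + M₂ is nearly S*-invariant, i.e., if f₁ ∈ M₁, f₂ ∈ M₂ and (f₁ + f₂)(0) = 0, then S*(f₁ + f₂) ∈ M₁ + M₂. -/

import Mathlib

open Complex MeasureTheory Metric Set ComplexConjugate

noncomputable section

/-- An "almost everywhere on the unit circle" statement, parametrized by angle. -/
def AECircle (P : ℝ → Prop) : Prop :=
  ∀ᵐ t ∂(MeasureTheory.volume.restrict (Set.Ioc (0:ℝ) (2 * Real.pi))), P t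

/-- The `n`-th Fourier coefficient of the boundary values of `f`. -/
def fc (f : ℂ → ℂ) (n : ℤ) : ℂ :=
  (1 / (2 * Real.pi) : ℝ) •
    ∫ t in (0:ℝ)..(2 * Real.pi),
      f (circleMap 0 1 t) * Complex.exp (-(n : ℂ) * (t : ℂ) * Complex.I)

/-- Square-integrability of the boundary values of `f` on the unit circle. -/
def MemL2 (f : ℂ → ℂ) : Prop :=
  Measurable (fun t : ℝ => f (circleMap 0 1 t)) ∧
    IntervalIntegrable (fun t => ‖f (circleMap 0 1 t)‖ ^ 2) MeasureTheory.volume 0 (2 * Real.pi)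

/-- Essential boundedness of the boundary values of `f` on the unit circle. -/
def MemLinf (f : ℂ → ℂ) : Prop :=
  Measurable (fun t : ℝ => f (circleMap 0 1 t)) ∧
    ∃ C : ℝ, AECircle fun t => ‖f (circleMap 0 1 t)‖ ≤ C

/-- Membership in the Hardy space `H²` of the unit disc: analytic on the disc,
square-integrable boundary values, vanishing negative Fourier coefficients, and
the Cauchy representation recovering interior values from boundary values. -/
def MemH2 (f : ℂ → ℂ) : Prop :=
  DifferentiableOn ℂ f (Metric.ball (0:ℂ) 1) ∧ MemL2 f ∧
    (∀ n : ℤ, n < 0 → fc f n = 0) ∧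
    ∀ z ∈ Metric.ball (0:ℂ) 1,
      f z = (1 / (2 * Real.pi) : ℝ) •
        ∫ t in (0:ℝ)..(2 * Real.pi),
          f (circleMap 0 1 t) * circleMap 0 1 t / (circleMap 0 1 t - z)

/-- `f` lies in the kernel of the Toeplitz operator `T_g` on `H²`:
`f ∈ H²` and the product `g·f` of boundary values has vanishing Fourier
coefficients of nonnegative index (i.e. `P_{H²}(g f) = 0`). -/
def MemKerT (g f : ℂ → ℂ) : Prop :=
  MemH2 f ∧ ∀ n : ℤ, 0 ≤ n → fc (fun z => g z * f z) n = 0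

/-- `f` is an inner function: bounded analytic on the disc, with unimodular
boundary values almost everywhere on the circle. -/
def IsInner (f : ℂ → ℂ) : Prop :=
  DifferentiableOn ℂ f (Metric.ball (0:ℂ) 1) ∧
    (∀ z ∈ Metric.ball (0:ℂ) 1, ‖f z‖ ≤ 1) ∧
    Measurable (fun t : ℝ => f (circleMap 0 1 t)) ∧
    AECircle fun t => ‖f (circleMap 0 1 t)‖ = 1

/-- `f` is an outer function: on the disc it has the standard exponential
representation via a real integrable function `k` on the circle. -/
def IsOuter (f : ℂ → ℂ) : Prop :=
  ∃ (α : ℂ) (k : ℝ → ℝ), ‖α‖ = 1 ∧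
    IntervalIntegrable k MeasureTheory.volume 0 (2 * Real.pi) ∧
    ∀ z ∈ Metric.ball (0:ℂ) 1,
      f z = α * Complex.exp ((1 / (2 * Real.pi) : ℝ) •
        ∫ t in (0:ℝ)..(2 * Real.pi),
          (circleMap 0 1 t + z) / (circleMap 0 1 t - z) * (k t : ℂ))

/-- Membership in `H^∞`: bounded analytic on the disc. -/
def MemHinf (f : ℂ → ℂ) : Prop :=
  DifferentiableOn ℂ f (Metric.ball (0:ℂ) 1) ∧
    ∃ C : ℝ, ∀ z ∈ Metric.ball (0:ℂ) 1, ‖f z‖ ≤ C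

/-- `f` is invertible in `H^∞`. -/
def HinfInvertible (f : ℂ → ℂ) : Prop :=
  ∃ g : ℂ → ℂ, MemHinf g ∧ ∀ z ∈ Metric.ball (0:ℂ) 1, f z * g z = 1

/-- `w` belongs to `𝒢H^∞`: it is invertible in `H^∞`, with control of
boundary values as well. -/
def MemGHinf (w : ℂ → ℂ) : Prop :=
  MemHinf w ∧ MemLinf w ∧
    ∃ w' : ℂ → ℂ, MemHinf w' ∧ MemLinf w' ∧
      (∀ z ∈ Metric.ball (0:ℂ) 1, w z * w' z = 1) ∧
      AECircle fun t => w (circleMap 0 1 t) * w' (circleMap 0 1 t) = 1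

/-- The backward shift `S* f = (f - f 0)/z` (with the correct value `f'(0)` at `0`). -/
def bshift (f : ℂ → ℂ) : ℂ → ℂ :=
  fun z => if z = 0 then deriv f 0 else (f z - f 0) / z

/-- Membership in the model space `K_θ = H² ⊖ θH² = ker T_{conj θ}`. -/
def MemModel (θ f : ℂ → ℂ) : Prop :=
  MemKerT (fun z => conj (θ z)) f

/-- The Toeplitz kernel `ker T_g` is trivial. -/
def KerTrivial (g : ℂ → ℂ) : Prop :=
  ∀ f, MemKerT g f → ∀ z ∈ Metric.ball (0:ℂ) 1, f z = 0

/-- The Toeplitz kernel `ker T_g` is nontrivial. -/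
def KerNontrivial (g : ℂ → ℂ) : Prop :=
  ∃ f, MemKerT g f ∧ ∃ z ∈ Metric.ball (0:ℂ) 1, f z ≠ 0

/-- `k` is a maximal vector for `ker T_g`: `k ∈ ker T_g` and `ker T_g` is the
minimal Toeplitz kernel containing `k`. -/
def MaximalVector (g k : ℂ → ℂ) : Prop :=
  MemKerT g k ∧
    ∀ h : ℂ → ℂ, MemLinf h → MemKerT h k →
      ∀ x, MemKerT g x → MemKerT h x


lemma bshift_eq_dslope (f : ℂ → ℂ) : bshift f = dslope f 0 := by
  funext z
  by_cases hz : z = 0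
  · simp [bshift, hz, dslope, Function.update]
  · simp [bshift, hz, dslope, slope, div_eq_inv_mul, smul_eq_mul]

lemma exists_iterate_ne (g : ℂ → ℂ) (hg : DifferentiableOn ℂ g (Metric.ball (0:ℂ) 1))
    {z₀ : ℂ} (hz₀ : z₀ ∈ Metric.ball (0:ℂ) 1) (hgz : g z₀ ≠ 0) :
    ∃ n : ℕ, (Function.swap dslope 0)^[n] g 0 ≠ 0 := by
  by_contra h
  push_neg at h
  have han : AnalyticOnNhd ℂ g (Metric.ball (0:ℂ) 1) := hg.analyticOnNhd Metric.isOpen_ball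
  have h0 : AnalyticAt ℂ g 0 := han 0 (by simp)
  obtain ⟨p, hpat⟩ := h0
  have hp0 : p = 0 := by
    by_contra hne
    exact (hpat.iterate_dslope_fslope_ne_zero hne) (h p.order)
  have hev : ∀ᶠ z in nhds (0:ℂ), g z = 0 := hpat.locally_zero_iff.mpr hp0
  have := han.eqOn_zero_of_preconnected_of_eventuallyEq_zero
    ((convex_ball (0:ℂ) 1).isPreconnected) (by simp : (0:ℂ) ∈ Metric.ball (0:ℂ) 1) hev
  exact hgz (this hz₀)

lemma bshift_add (f g : ℂ → ℂ) (hf : DifferentiableAt ℂ f 0) (hg : DifferentiableAt ℂ g 0) :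
    bshift (f + g) = bshift f + bshift g := by
  funext z
  by_cases hz : z = 0
  · subst hz
    simp only [bshift, if_pos rfl, Pi.add_apply]
    exact deriv_add hf hg
  · simp only [bshift, if_neg hz, Pi.add_apply]
    ring

/-- the sum of two nearly `S*`-invariant subspaces of `H²` with
nontrivial intersection is nearly `S*`-invariant. -/
theorem sum_nearly_invariant (M₁ M₂ : Submodule ℂ (ℂ → ℂ))
    (h₁H2 : ∀ f ∈ M₁, MemH2 f) (h₂H2 : ∀ f ∈ M₂, MemH2 f)
    (h₁ : ∀ f ∈ M₁, f 0 = 0 → bshift f ∈ M₁)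
    (h₂ : ∀ f ∈ M₂, f 0 = 0 → bshift f ∈ M₂)
    (hne : ∃ g ∈ M₁ ⊓ M₂, ∃ z ∈ Metric.ball (0:ℂ) 1, g z ≠ 0) :
    ∀ f ∈ M₁ ⊔ M₂, f 0 = 0 → bshift f ∈ M₁ ⊔ M₂ := by
  have key : ∃ h ∈ M₁ ⊓ M₂, h 0 ≠ 0 := by
    obtain ⟨g, hg, z₀, hz₀, hgz⟩ := hne
    obtain ⟨n, hn⟩ := exists_iterate_ne g (h₁H2 g hg.1).1 hz₀ hgz
    clear hz₀ hgz
    induction n generalizing g with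
    | zero => exact ⟨g, hg, hn⟩
    | succ n ih =>
      by_cases hg0 : g 0 = 0
      · have hb : bshift g ∈ M₁ ⊓ M₂ := ⟨h₁ g hg.1 hg0, h₂ g hg.2 hg0⟩
        refine ih (bshift g) hb ?_
        rw [bshift_eq_dslope]
        rwa [Function.iterate_succ_apply] at hn
      · exact ⟨g, hg, hg0⟩
  intro f hf hf0
  obtain ⟨f₁, hf₁, f₂, hf₂, hsum⟩ := Submodule.mem_sup.mp hf
  obtain ⟨g, hg, hg0⟩ := key
  set lam : ℂ := f₁ 0 / g 0 with hlam
  set F₁ : ℂ → ℂ := f₁ - lam • g with hF₁def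
  set F₂ : ℂ → ℂ := f₂ + lam • g with hF₂def
  have hF₁ : F₁ ∈ M₁ := M₁.sub_mem hf₁ (M₁.smul_mem _ hg.1)
  have hF₂ : F₂ ∈ M₂ := M₂.add_mem hf₂ (M₂.smul_mem _ hg.2)
  have hsum0 : f₁ 0 + f₂ 0 = 0 := by
    have := congrFun hsum 0
    simpa [hf0] using this
  have e1 : F₁ 0 = 0 := by
    simp only [hF₁def, Pi.sub_apply, Pi.smul_apply, smul_eq_mul, hlam]
    field_simp
    ring
  have e2 : F₂ 0 = 0 := by
    simp only [hF₂def, Pi.add_apply, Pi.smul_apply, smul_eq_mul, hlam]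
    rw [div_mul_cancel₀ _ hg0]
    linear_combination hsum0
  have hFsum : F₁ + F₂ = f := by
    rw [hF₁def, hF₂def, ← hsum]; abel
  have d1 : DifferentiableAt ℂ F₁ 0 :=
    ((h₁H2 F₁ hF₁).1).differentiableAt (Metric.isOpen_ball.mem_nhds (by simp))
  have d2 : DifferentiableAt ℂ F₂ 0 :=
    ((h₂H2 F₂ hF₂).1).differentiableAt (Metric.isOpen_ball.mem_nhds (by simp))
  have : bshift f = bshift F₁ + bshift F₂ := by
    rw [← hFsum, bshift_add F₁ F₂ d1 d2]
  rw [this]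
  exact Submodule.add_mem_sup (h₁ F₁ hF₁ e1) (h₂ F₂ hF₂ e2)

end
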